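/- For all real numbers a and b with 0 < a < 1 and 0 < b < 1, one has log(1 − a)·log(1 − b) ≥ (log(1 − √(a·b)))². -/
import Mathlib


/-- For `0 < a < 1` and `0 < b < 1`,
`log(1 − a) · log(1 − b) ≥ (log(1 − √(a·b)))²`. -/
theorem log_one_sub_mul_log_one_sub_ge
    (a b : ℝ) (ha0 : 0 < a) (ha1 : a < 1) (hb0 : 0 < b) (hb1 : b < 1) :
    (Real.log (1 - Real.sqrt (a * b))) ^ 2 ≤ Real.log (1 - a) * Real.log (1 - b) := by
  have hab0 : 0 < a * b := mul_pos ha0 hb0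
  have hab1 : a * b < 1 := by nlinarith
  set s := Real.sqrt (a * b) with hs_def
  have hs0 : 0 < s := Real.sqrt_pos.mpr hab0
  have hs1 : s < 1 := by
    have := Real.sqrt_lt_sqrt hab0.le hab1
    simpa using this
  set fa : ℕ → ℝ := fun n => a ^ (n + 1) / (n + 1) with hfa
  set fb : ℕ → ℝ := fun n => b ^ (n + 1) / (n + 1) with hfb
  set fc : ℕ → ℝ := fun n => s ^ (n + 1) / (n + 1) with hfc
  have hA : HasSum fa (-Real.log (1 - a)) :=
    Real.hasSum_pow_div_log_of_abs_lt_one (by rw [abs_of_pos ha0]; exact ha1)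
  have hB : HasSum fb (-Real.log (1 - b)) :=
    Real.hasSum_pow_div_log_of_abs_lt_one (by rw [abs_of_pos hb0]; exact hb1)
  have hC : HasSum fc (-Real.log (1 - s)) :=
    Real.hasSum_pow_div_log_of_abs_lt_one (by rw [abs_of_pos hs0]; exact hs1)
  have hfa0 : ∀ n, 0 ≤ fa n := fun n => by positivity
  have hfb0 : ∀ n, 0 ≤ fb n := fun n => by positivity
  have hA0 : 0 ≤ -Real.log (1 - a) := hA.nonneg hfa0
  have hB0 : 0 ≤ -Real.log (1 - b) := hB.nonneg hfb0
  have hC0 : 0 ≤ -Real.log (1 - s) := hC.nonneg (fun n => by positivity)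
  have hsq : a * b = s ^ 2 := (Real.sq_sqrt hab0.le).symm
  have hpt : ∀ n, Real.sqrt (fa n) * Real.sqrt (fb n) = fc n := by
    intro n
    have h1 : fa n * fb n = (fc n) ^ 2 := by
      simp only [hfa, hfb, hfc]
      rw [div_mul_div_comm, div_pow, ← mul_pow, hsq, ← pow_mul, ← pow_mul, mul_comm 2 (n+1), sq]
    rw [← Real.sqrt_mul (hfa0 n), h1, Real.sqrt_sq (by positivity)]
  -- key: for every finset, partial sum of fc is ≤ √(A*B)
  have key : ∀ t : Finset ℕ, ∑ n ∈ t, fc n ≤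
      Real.sqrt ((-Real.log (1 - a)) * (-Real.log (1 - b))) := by
    intro t
    have hcs := Finset.sum_mul_sq_le_sq_mul_sq t (fun n => Real.sqrt (fa n))
      (fun n => Real.sqrt (fb n))
    simp only [Real.sq_sqrt (hfa0 _), Real.sq_sqrt (hfb0 _), hpt] at hcs
    have h2 : ∑ n ∈ t, fa n ≤ -Real.log (1 - a) :=
      sum_le_hasSum t (fun n _ => hfa0 n) hA
    have h3 : ∑ n ∈ t, fb n ≤ -Real.log (1 - b) :=
      sum_le_hasSum t (fun n _ => hfb0 n) hB
    have h4 : (∑ n ∈ t, fc n) ^ 2 ≤ (-Real.log (1 - a)) * (-Real.log (1 - b)) := by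
      calc (∑ n ∈ t, fc n) ^ 2 ≤ (∑ n ∈ t, fa n) * (∑ n ∈ t, fb n) := hcs
      _ ≤ _ := by
        apply mul_le_mul h2 h3 (Finset.sum_nonneg fun n _ => hfb0 n) hA0
    have h5 : 0 ≤ ∑ n ∈ t, fc n := Finset.sum_nonneg fun n _ => by positivity
    nlinarith [Real.sq_sqrt (mul_nonneg hA0 hB0),
      Real.sqrt_nonneg ((-Real.log (1 - a)) * (-Real.log (1 - b))),
      sq_nonneg (∑ n ∈ t, fc n - Real.sqrt ((-Real.log (1 - a)) * (-Real.log (1 - b))))]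
  have hCle : -Real.log (1 - s) ≤
      Real.sqrt ((-Real.log (1 - a)) * (-Real.log (1 - b))) := by
    rw [← hC.tsum_eq]
    exact Summable.tsum_le_of_sum_le hC.summable key
  nlinarith [Real.sq_sqrt (mul_nonneg hA0 hB0),
    Real.sqrt_nonneg ((-Real.log (1 - a)) * (-Real.log (1 - b)))]
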